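/- Assume the CFL condition λ L_V ≤ 1. Then the periodic explicit Euler FtL scheme is monotone: if (y_i^n) and (ỹ_i^n) are two sequences generated by the scheme and y_i^0 ≤ ỹ_i^0 for all i = 1,…,N−1, then y_i^n ≤ ỹ_i^n for all i = 1,…,N−1 and all n ≥ 0. -/
import Mathlib


/-- `y n i`, `i = 1, …, N-1`, is generated by the periodic explicit Euler
Follow-the-Leader scheme `y_i^{n+1} = y_i^n + λ(V(y_{i+1}^n) − V(y_i^n))`,
with the periodic convention `y_N^n := y_1^n`. -/
def IsEulerFtL (N : ℕ) (lam : ℝ) (V : ℝ → ℝ) (y : ℕ → ℕ → ℝ) : Prop :=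
  (∀ n : ℕ, y n N = y n 1) ∧
  ∀ n : ℕ, ∀ i ∈ Finset.Icc 1 (N - 1),
    y (n + 1) i = y n i + lam * (V (y n (i + 1)) - V (y n i))

/-- Under the CFL condition, the periodic explicit Euler FtL scheme is
monotone: initial comparison `y_i^0 ≤ ỹ_i^0` is propagated to all times. -/
theorem eulerFtL_monotone
    (N : ℕ) (hN : 2 ≤ N) (ℓ Δt : ℝ) (hℓ : 0 < ℓ) (hΔt : 0 < Δt)
    (V : ℝ → ℝ) (LV : NNReal) (hVlip : LipschitzWith LV V) (hVmono : Monotone V)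
    (hCFL : Δt / ℓ * (LV : ℝ) ≤ 1)
    (y yt : ℕ → ℕ → ℝ)
    (hy : IsEulerFtL N (Δt / ℓ) V y) (hyt : IsEulerFtL N (Δt / ℓ) V yt)
    (h0 : ∀ i ∈ Finset.Icc 1 (N - 1), y 0 i ≤ yt 0 i) :
    ∀ n : ℕ, ∀ i ∈ Finset.Icc 1 (N - 1), y n i ≤ yt n i := by
  obtain ⟨hyN, hyrec⟩ := hy
  obtain ⟨hytN, hytrec⟩ := hyt
  intro n
  induction n with
  | zero => exact h0
  | succ n ih =>
    intro i hi
    have hi' := Finset.mem_Icc.mp hi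
    have hlam : 0 ≤ Δt / ℓ := by positivity
    have hcur : y n i ≤ yt n i := ih i hi
    have hnext : y n (i + 1) ≤ yt n (i + 1) := by
      by_cases h : i + 1 ≤ N - 1
      · exact ih (i + 1) (Finset.mem_Icc.mpr ⟨by omega, h⟩)
      · have hiN : i + 1 = N := by omega
        rw [hiN, hyN n, hytN n]
        exact ih 1 (Finset.mem_Icc.mpr ⟨le_refl 1, by omega⟩)
    have hVnext : V (y n (i + 1)) ≤ V (yt n (i + 1)) := hVmono hnext
    have hVnext' : (Δt / ℓ) * V (y n (i + 1)) ≤ (Δt / ℓ) * V (yt n (i + 1)) :=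
      mul_le_mul_of_nonneg_left hVnext hlam
    have hlip : V (yt n i) - V (y n i) ≤ (LV : ℝ) * (yt n i - y n i) := by
      have h1 := hVlip.dist_le_mul (yt n i) (y n i)
      rw [Real.dist_eq, Real.dist_eq, abs_of_nonneg (sub_nonneg.mpr hcur)] at h1
      exact (abs_le.mp h1).2
    have key : y n i - (Δt / ℓ) * V (y n i) ≤ yt n i - (Δt / ℓ) * V (yt n i) := by
      have h2 : (Δt / ℓ) * (V (yt n i) - V (y n i)) ≤
          (Δt / ℓ) * ((LV : ℝ) * (yt n i - y n i)) :=
        mul_le_mul_of_nonneg_left hlip hlam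
      have h3 : (Δt / ℓ) * (LV : ℝ) * (yt n i - y n i) ≤ 1 * (yt n i - y n i) :=
        mul_le_mul_of_nonneg_right hCFL (sub_nonneg.mpr hcur)
      nlinarith
    rw [hyrec n i hi, hytrec n i hi]
    linarith
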